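/- arXiv:2502.05688 — 3 statements merged into one kernel-verified Lean document; each statement's English description precedes it below -/
import Mathlib

section
/- Let n be a positive integer, let Σ be a real symmetric positive definite 2n×2n matrix and let Ω be an invertible real skew-symmetric 2n×2n matrix. Then the complex matrix Σ + (i/2)·Ω is positive semidefinite if and only if every complex eigenvalue λ of the complex matrix 2i·Ω⁻¹·Σ satisfies |λ| ≥ 1. -/
open Matrix Complex
open scoped ComplexOrder

section Aux

variable {m : Type*} [Fintype m] [DecidableEq m]

private lemma aux_spectrum_herm (A : Matrix m m ℂ) (hA : A.IsHermitian) :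
    spectrum ℂ A = Set.range (fun i => (hA.eigenvalues i : ℂ)) := by
  conv_lhs => rw [hA.spectral_theorem, Unitary.conjStarAlgAut_apply, Unitary.spectrum_star_right_conjugate]
  rw [spectrum_diagonal]
  rfl

private lemma aux_mem_spec_iff_det (M : Matrix m m ℂ) (μ : ℂ) :
    μ ∈ spectrum ℂ M ↔ (μ • (1 : Matrix m m ℂ) - M).det = 0 := by
  rw [spectrum.mem_iff, Matrix.isUnit_iff_isUnit_det, isUnit_iff_ne_zero, not_not,
    Algebra.algebraMap_eq_smul_one]

private lemma aux_map_mul (M N : Matrix m m ℝ) :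
    (M * N).map Complex.ofReal = M.map Complex.ofReal * N.map Complex.ofReal :=
  Matrix.map_mul (f := Complex.ofRealHom)

private lemma aux_map_ct (M : Matrix m m ℝ) :
    (M.map Complex.ofReal)ᴴ = Mᵀ.map Complex.ofReal := by
  ext i j
  simp [conjTranspose_apply]

private lemma aux_map_det (M : Matrix m m ℝ) :
    (M.map Complex.ofReal).det = Complex.ofReal M.det :=
  (RingHom.map_det Complex.ofRealHom M).symm

private lemma aux_conj_det (M : Matrix m m ℂ) :
    (M.map (starRingEnd ℂ)).det = starRingEnd ℂ M.det :=
  (RingHom.map_det (starRingEnd ℂ) M).symm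

private lemma aux_posSemidef_conj (S N : Matrix m m ℂ) (hSH : Sᴴ = S) (hSu : IsUnit S.det) :
    (S * N * S).PosSemidef ↔ N.PosSemidef := by
  constructor
  · intro h
    have h2 := h.conjTranspose_mul_mul_same (B := S⁻¹)
    have e : (S⁻¹)ᴴ * (S * N * S) * S⁻¹ = N := by
      rw [Matrix.conjTranspose_nonsing_inv, hSH]
      calc S⁻¹ * (S * N * S) * S⁻¹ = S⁻¹ * S * (N * (S * S⁻¹)) := by
            simp only [Matrix.mul_assoc]
        _ = N := by rw [Matrix.nonsing_inv_mul S hSu, Matrix.mul_nonsing_inv S hSu,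
              one_mul, mul_one]
    rwa [e] at h2
  · intro h
    have h2 := h.conjTranspose_mul_mul_same (B := S)
    rwa [hSH] at h2

private lemma aux_posSemidef_one_add (A : Matrix m m ℂ) (hA : A.IsHermitian) :
    (1 + (2:ℂ)⁻¹ • A).PosSemidef ↔ ∀ i, -2 ≤ hA.eigenvalues i := by
  set U : Matrix m m ℂ := (hA.eigenvectorUnitary : Matrix m m ℂ) with hU
  have hU1 : U * star U = 1 := (Matrix.mem_unitaryGroup_iff).mp hA.eigenvectorUnitary.2
  have hU2 : star U * U = 1 := (Matrix.mem_unitaryGroup_iff').mp hA.eigenvectorUnitary.2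
  set d : m → ℂ := fun i => ((1 + hA.eigenvalues i / 2 : ℝ) : ℂ) with hd
  have hdiag : diagonal d = 1 + (2:ℂ)⁻¹ • diagonal (RCLike.ofReal ∘ hA.eigenvalues) := by
    ext i j
    by_cases h : i = j
    · subst h
      simp [Matrix.diagonal_apply_eq, Matrix.one_apply_eq, hd]
      push_cast
      ring
    · simp [Matrix.diagonal_apply_ne _ h, Matrix.one_apply_ne h]
  have key : U * diagonal d * star U = 1 + (2:ℂ)⁻¹ • A := by
    conv_rhs => rw [hA.spectral_theorem, Unitary.conjStarAlgAut_apply]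
    rw [← hU, hdiag, Matrix.mul_add, Matrix.add_mul, Matrix.mul_one, hU1,
      Matrix.mul_smul, Matrix.smul_mul]
  rw [← key]
  have equiv1 : (U * diagonal d * star U).PosSemidef ↔ (diagonal d).PosSemidef := by
    constructor
    · intro h
      have h2 := h.conjTranspose_mul_mul_same (B := U)
      have e : Uᴴ * (U * diagonal d * star U) * U = diagonal d := by
        rw [← Matrix.star_eq_conjTranspose]
        calc star U * (U * diagonal d * star U) * U
            = star U * U * (diagonal d * (star U * U)) := by simp only [Matrix.mul_assoc]
          _ = diagonal d := by rw [hU2]; simp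
      rwa [e] at h2
    · intro h
      have h2 := h.mul_mul_conjTranspose_same (B := U)
      rwa [Matrix.star_eq_conjTranspose]
  rw [equiv1, Matrix.posSemidef_diagonal_iff]
  constructor
  · intro h i
    have := h i
    rw [hd] at this
    simp only [Complex.zero_le_real] at this
    linarith
  · intro h i
    rw [hd]
    simp only [Complex.zero_le_real]
    linarith [h i]

end Aux

/-- The Robertson–Schrödinger uncertainty principle `Sig + (i/2)Ω ⪰ 0` holds iff every
(noncommutative symplectic) eigenvalue `μ` of `2i Ω⁻¹ Sig` satisfies `|μ| ≥ 1`. -/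
theorem RSUP_iff_symplectic_eigenvalues (n : ℕ) (hn : 0 < n)
    (Sig Ω : Matrix (Fin (2 * n)) (Fin (2 * n)) ℝ)
    (hSym : Sigᵀ = Sig) (hPD : Sig.PosDef)
    (hΩunit : IsUnit Ω) (hΩskew : Ωᵀ = -Ω) :
    (Sig.map Complex.ofReal + (Complex.I / 2) • Ω.map Complex.ofReal).PosSemidef
      ↔ ∀ μ : ℂ, μ ∈ spectrum ℂ
          ((2 * Complex.I) • ((Ω.map Complex.ofReal)⁻¹ * Sig.map Complex.ofReal)) →
          1 ≤ ‖μ‖ := by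
  classical
  set SC : Matrix (Fin (2*n)) (Fin (2*n)) ℂ := Sig.map Complex.ofReal with hSCdef
  set WC : Matrix (Fin (2*n)) (Fin (2*n)) ℂ := Ω.map Complex.ofReal with hWCdef
  -- basic determinant facts
  have hdetSig : Sig.det ≠ 0 := ne_of_gt hPD.det_pos
  have hdetSC : SC.det ≠ 0 := by
    rw [hSCdef, aux_map_det]
    exact_mod_cast hdetSig
  have hdetΩ : Ω.det ≠ 0 := ((Matrix.isUnit_iff_isUnit_det Ω).mp hΩunit).ne_zero
  have hdetWC : WC.det ≠ 0 := by
    rw [hWCdef, aux_map_det]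
    exact_mod_cast hdetΩ
  have hWu : IsUnit WC.det := isUnit_iff_ne_zero.mpr hdetWC
  have hWH : WCᴴ = -WC := by
    rw [hWCdef, aux_map_ct, hΩskew]
    ext i j
    simp
  -- square root of Sig
  open scoped MatrixOrder in
  set S0 : Matrix (Fin (2*n)) (Fin (2*n)) ℝ := CFC.sqrt Sig with hS0def
  open scoped MatrixOrder in
  have hS0mul : S0 * S0 = Sig := CFC.sqrt_mul_sqrt_self Sig hPD.posSemidef.nonneg
  have hS0T : S0ᵀ = S0 := by
    open scoped MatrixOrder in
    have h := (Matrix.nonneg_iff_posSemidef.mp (CFC.sqrt_nonneg Sig)).isHermitian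
    rwa [Matrix.IsHermitian, Matrix.conjTranspose_eq_transpose_of_trivial] at h
  set S : Matrix (Fin (2*n)) (Fin (2*n)) ℂ := S0.map Complex.ofReal with hSdef
  have hSmul : S * S = SC := by rw [hSdef, hSCdef, ← aux_map_mul, hS0mul]
  have hSH : Sᴴ = S := by rw [hSdef, aux_map_ct, hS0T]
  have hdetS : S.det ≠ 0 := by
    have h : S.det * S.det = SC.det := by rw [← Matrix.det_mul, hSmul]
    intro h0
    exact hdetSC (by rw [← h, h0, mul_zero])
  have hSu : IsUnit S.det := isUnit_iff_ne_zero.mpr hdetS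
  -- the Hermitian matrix A
  set A : Matrix (Fin (2*n)) (Fin (2*n)) ℂ := Complex.I • (S⁻¹ * WC * S⁻¹) with hAdef
  have hAH : A.IsHermitian := by
    rw [Matrix.IsHermitian, hAdef]
    simp only [Matrix.conjTranspose_smul, Matrix.conjTranspose_mul,
      Matrix.conjTranspose_nonsing_inv, hSH, hWH, Complex.star_def, Complex.conj_I,
      Matrix.mul_neg, Matrix.neg_mul, smul_neg, neg_smul, neg_neg, Matrix.mul_assoc]
  -- congruence identity
  have e1 : S⁻¹ * SC * S⁻¹ = 1 := by
    rw [← hSmul]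
    calc S⁻¹ * (S * S) * S⁻¹ = (S⁻¹ * S) * (S * S⁻¹) := by simp only [Matrix.mul_assoc]
      _ = 1 := by rw [Matrix.nonsing_inv_mul S hSu, Matrix.mul_nonsing_inv S hSu, one_mul]
  have hSAS : S * A * S = Complex.I • WC := by
    rw [hAdef, Matrix.mul_smul, Matrix.smul_mul]
    congr 1
    calc S * (S⁻¹ * WC * S⁻¹) * S = (S * S⁻¹) * (WC * (S⁻¹ * S)) := by
          simp only [Matrix.mul_assoc]
      _ = WC := by rw [Matrix.mul_nonsing_inv S hSu, Matrix.nonsing_inv_mul S hSu,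
            one_mul, mul_one]
  have hM : SC + (Complex.I / 2) • WC = S * (1 + (2:ℂ)⁻¹ • A) * S := by
    rw [Matrix.mul_add, Matrix.mul_one, Matrix.add_mul, Matrix.mul_smul, Matrix.smul_mul,
      hSmul, hSAS, smul_smul]
    rw [show (2:ℂ)⁻¹ * Complex.I = Complex.I / 2 from by ring]
  have hLHS : (SC + (Complex.I / 2) • WC).PosSemidef ↔ ∀ i, -2 ≤ hAH.eigenvalues i := by
    rw [hM, aux_posSemidef_conj S _ hSH hSu, aux_posSemidef_one_add A hAH]
  -- determinant characterization of the spectra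
  have hP : ∀ μ : ℂ, μ ∈ spectrum ℂ ((2 * Complex.I) • (WC⁻¹ * SC)) ↔
      (μ • WC - (2 * Complex.I) • SC).det = 0 := by
    intro μ
    rw [aux_mem_spec_iff_det]
    have e : μ • (1 : Matrix (Fin (2*n)) (Fin (2*n)) ℂ) - (2 * Complex.I) • (WC⁻¹ * SC)
        = WC⁻¹ * (μ • WC - (2 * Complex.I) • SC) := by
      rw [Matrix.mul_sub, Matrix.mul_smul, Matrix.mul_smul, Matrix.nonsing_inv_mul WC hWu]
    rw [e, Matrix.det_mul]
    simp [Matrix.det_nonsing_inv, Ring.inverse_eq_inv', inv_eq_zero, hdetWC]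
  have hQ : ∀ l : ℂ, l ∈ spectrum ℂ A ↔ (l • SC - Complex.I • WC).det = 0 := by
    intro l
    rw [aux_mem_spec_iff_det]
    have e : l • (1 : Matrix (Fin (2*n)) (Fin (2*n)) ℂ) - A
        = S⁻¹ * (l • SC - Complex.I • WC) * S⁻¹ := by
      rw [Matrix.mul_sub, Matrix.sub_mul, Matrix.mul_smul, Matrix.smul_mul, e1,
        Matrix.mul_smul, Matrix.smul_mul, hAdef]
    rw [e, Matrix.det_mul, Matrix.det_mul]
    simp [Matrix.det_nonsing_inv, Ring.inverse_eq_inv', inv_eq_zero, hdetS, mul_eq_zero]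
  have hdet0T : (0:ℂ) ∉ spectrum ℂ ((2 * Complex.I) • (WC⁻¹ * SC)) := by
    rw [hP 0]
    simp only [zero_smul, zero_sub, Matrix.det_neg, Matrix.det_smul]
    intro h0
    rcases mul_eq_zero.mp h0 with h | h
    · exact pow_ne_zero _ (neg_ne_zero.mpr one_ne_zero) h
    · rcases mul_eq_zero.mp h with h | h
      · exact pow_ne_zero _ (by simp [Complex.I_ne_zero] : (2 * Complex.I) ≠ 0) h
      · exact hdetSC h
  have hdet0A : (0:ℂ) ∉ spectrum ℂ A := by
    rw [hQ 0]
    simp only [zero_smul, zero_sub, Matrix.det_neg, Matrix.det_smul]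
    intro h0
    rcases mul_eq_zero.mp h0 with h | h
    · exact pow_ne_zero _ (neg_ne_zero.mpr one_ne_zero) h
    · rcases mul_eq_zero.mp h with h | h
      · exact pow_ne_zero _ Complex.I_ne_zero h
      · exact hdetWC h
  have hPQ : ∀ μ : ℂ, μ ≠ 0 →
      ((μ • WC - (2 * Complex.I) • SC).det = 0 ↔
        (((-2/μ) : ℂ) • SC - Complex.I • WC).det = 0) := by
    intro μ hμ
    have c1 : Complex.I * μ * (-2/μ) = -(2 * Complex.I) := by
      field_simp
    have c2 : Complex.I * μ * Complex.I = -μ := by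
      have h : Complex.I * μ * Complex.I = (Complex.I * Complex.I) * μ := by ring
      rw [h, Complex.I_mul_I]
      ring
    have e : μ • WC - (2 * Complex.I) • SC
        = (Complex.I * μ) • (((-2/μ) : ℂ) • SC - Complex.I • WC) := by
      rw [smul_sub, smul_smul, smul_smul, c1, c2, neg_smul, neg_smul, sub_neg_eq_add]
      abel
    have hiμ : (Complex.I * μ) ≠ 0 := mul_ne_zero Complex.I_ne_zero hμ
    rw [e, Matrix.det_smul, mul_eq_zero]
    simp [pow_ne_zero _ hiμ]
  have hQneg : ∀ r : ℝ, (((r:ℝ):ℂ) • SC - Complex.I • WC).det = 0 →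
      ((((-r:ℝ)):ℂ) • SC - Complex.I • WC).det = 0 := by
    intro r h
    have e : (((-r:ℝ)):ℂ) • SC - Complex.I • WC
        = -((((r:ℝ):ℂ) • SC - Complex.I • WC).map (starRingEnd ℂ)) := by
      ext i j
      simp [hSCdef, hWCdef, Matrix.map_apply, Matrix.sub_apply, Matrix.smul_apply,
        Matrix.neg_apply, smul_eq_mul, Complex.conj_ofReal]
      push_cast
      ring
    rw [e, Matrix.det_neg, aux_conj_det, h]
    simp
  have hspecA : spectrum ℂ A = Set.range (fun i => (hAH.eigenvalues i : ℂ)) :=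
    aux_spectrum_herm A hAH
  -- main assembly
  rw [hLHS]
  constructor
  · intro hev μ hμ
    have hμ0 : μ ≠ 0 := fun h => hdet0T (h ▸ hμ)
    have hmem : ((-2/μ) : ℂ) ∈ spectrum ℂ A := (hQ _).mpr ((hPQ μ hμ0).mp ((hP μ).mp hμ))
    rw [hspecA] at hmem
    obtain ⟨i, hi⟩ := hmem
    have hQi : (((hAH.eigenvalues i : ℝ) : ℂ) • SC - Complex.I • WC).det = 0 :=
      (hQ _).mp (by rw [hspecA]; exact ⟨i, rfl⟩)
    have h2 : ((((-hAH.eigenvalues i : ℝ)) : ℂ)) ∈ spectrum ℂ A :=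
      (hQ _).mpr (hQneg _ hQi)
    rw [hspecA] at h2
    obtain ⟨j, hj⟩ := h2
    have hj2 : ((hAH.eigenvalues j : ℝ) : ℂ) = (((-hAH.eigenvalues i : ℝ)) : ℂ) := hj
    have hj' : hAH.eigenvalues j = -hAH.eigenvalues i := by exact_mod_cast hj2
    have hup : hAH.eigenvalues i ≤ 2 := by
      have := hev j
      rw [hj'] at this
      linarith
    have hlow : -2 ≤ hAH.eigenvalues i := hev i
    have habs : |hAH.eigenvalues i| ≤ 2 := abs_le.mpr ⟨hlow, hup⟩
    have hne : hAH.eigenvalues i ≠ 0 := by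
      intro h0
      apply hdet0A
      rw [hspecA]
      refine ⟨i, ?_⟩
      show ((hAH.eigenvalues i : ℝ) : ℂ) = 0
      rw [h0]
      norm_num
    have hneC : ((hAH.eigenvalues i : ℝ) : ℂ) ≠ 0 := by exact_mod_cast hne
    have hμval : μ = -2 / ((hAH.eigenvalues i : ℝ) : ℂ) := by
      have hi2 : ((hAH.eigenvalues i : ℝ) : ℂ) = -2/μ := hi
      rw [eq_div_iff hμ0] at hi2
      rw [eq_div_iff hneC]
      linear_combination hi2
    have habsμ : ‖μ‖ = 2 / |hAH.eigenvalues i| := by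
      rw [hμval, norm_div]
      simp [Complex.norm_real]
    rw [habsμ]
    rw [one_le_div (abs_pos.mpr hne)]
    exact habs
  · intro h i
    have hQi : ((hAH.eigenvalues i : ℝ) : ℂ) ∈ spectrum ℂ A := by
      rw [hspecA]; exact ⟨i, rfl⟩
    have hneC : ((hAH.eigenvalues i : ℝ) : ℂ) ≠ 0 := fun h0 => hdet0A (h0 ▸ hQi)
    have hne : hAH.eigenvalues i ≠ 0 := by exact_mod_cast hneC
    set μ : ℂ := -2 / ((hAH.eigenvalues i : ℝ) : ℂ) with hμdef
    have hμ0 : μ ≠ 0 := div_ne_zero (by norm_num) hneC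
    have hPμ : μ ∈ spectrum ℂ ((2 * Complex.I) • (WC⁻¹ * SC)) := by
      rw [hP, hPQ μ hμ0]
      have : ((-2/μ) : ℂ) = ((hAH.eigenvalues i : ℝ) : ℂ) := by
        rw [hμdef]
        field_simp
      rw [this]
      exact (hQ _).mp hQi
    have h1 := h μ hPμ
    have habsμ : ‖μ‖ = 2 / |hAH.eigenvalues i| := by
      rw [hμdef, norm_div]
      simp [Complex.norm_real]
    rw [habsμ, one_le_div (abs_pos.mpr hne)] at h1
    have := abs_le.mp h1
    linarith [this.1]
end

section
/- Let m, n be real numbers with m² + n² < 1, set R = √(m²+n²), and let Σ⁰(m,n) be the 8×8 real matrix [[I₄, γ],[γ, I₄]] with γ(m,n) = [[n·I₂, m·σ_z],[m·σ_z, −n·I₂]], σ_z = diag(1,−1). Let A_n = ∂Σ⁰/∂n = [[0, γ_n],[γ_n, 0]] with γ_n = [[I₂, 0],[0, −I₂]], and A_m = ∂Σ⁰/∂m = [[0, γ_m],[γ_m, 0]] with γ_m = [[0, σ_z],[σ_z, 0]]. Then: (1/2)·Tr[(Σ⁰)⁻¹ A_n (Σ⁰)⁻¹ A_n] = 4(1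 − m² + n²)/(1 − R²)², (1/2)·Tr[(Σ⁰)⁻¹ A_m (Σ⁰)⁻¹ A_m] = 4(1 + m² − n²)/(1 − R²)², and (1/2)·Tr[(Σ⁰)⁻¹ A_n (Σ⁰)⁻¹ A_m] = 8mn/(1 − R²)². -/
open Matrix

lemma trace_fromBlocks' {l m : Type*} [Fintype l] [Fintype m]
    (A : Matrix l l ℝ) (B : Matrix l m ℝ) (C : Matrix m l ℝ) (D : Matrix m m ℝ) :
    (Matrix.fromBlocks A B C D).trace = A.trace + D.trace := by
  simp [Matrix.trace, Fintype.sum_sum_type, Matrix.fromBlocks]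

/-- Fisher–Rao metric components of the normalized covariance matrix `Sig0`:
`g⁰₁₁ = 4(1 − m² + n²)/(1 − R²)²`, `g⁰₂₂ = 4(1 + m² − n²)/(1 − R²)²`,
`g⁰₁₂ = 8mn/(1 − R²)²`. -/
theorem fisher_rao_components (m n : ℝ) (hmn : m ^ 2 + n ^ 2 < 1)
    (R : ℝ) (hR : R = Real.sqrt (m ^ 2 + n ^ 2))
    (σz : Matrix (Fin 2) (Fin 2) ℝ) (hσz : σz = Matrix.diagonal ![1, -1])
    (γ : Matrix (Fin 2 ⊕ Fin 2) (Fin 2 ⊕ Fin 2) ℝ)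
    (hγ : γ = Matrix.fromBlocks (n • (1 : Matrix (Fin 2) (Fin 2) ℝ)) (m • σz)
        (m • σz) (-(n • (1 : Matrix (Fin 2) (Fin 2) ℝ))))
    (Sig0 : Matrix ((Fin 2 ⊕ Fin 2) ⊕ (Fin 2 ⊕ Fin 2)) ((Fin 2 ⊕ Fin 2) ⊕ (Fin 2 ⊕ Fin 2)) ℝ)
    (hSig0 : Sig0 = Matrix.fromBlocks 1 γ γ 1)
    (γn γm : Matrix (Fin 2 ⊕ Fin 2) (Fin 2 ⊕ Fin 2) ℝ)
    (hγn : γn = Matrix.fromBlocks 1 0 0 (-1))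
    (hγm : γm = Matrix.fromBlocks 0 σz σz 0)
    (An Am : Matrix ((Fin 2 ⊕ Fin 2) ⊕ (Fin 2 ⊕ Fin 2)) ((Fin 2 ⊕ Fin 2) ⊕ (Fin 2 ⊕ Fin 2)) ℝ)
    (hAn : An = Matrix.fromBlocks 0 γn γn 0)
    (hAm : Am = Matrix.fromBlocks 0 γm γm 0) :
    (1 / 2 : ℝ) * (Sig0⁻¹ * An * Sig0⁻¹ * An).trace
        = 4 * (1 - m ^ 2 + n ^ 2) / (1 - R ^ 2) ^ 2 ∧
    (1 / 2 : ℝ) * (Sig0⁻¹ * Am * Sig0⁻¹ * Am).trace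
        = 4 * (1 + m ^ 2 - n ^ 2) / (1 - R ^ 2) ^ 2 ∧
    (1 / 2 : ℝ) * (Sig0⁻¹ * An * Sig0⁻¹ * Am).trace
        = 8 * m * n / (1 - R ^ 2) ^ 2 := by
  have hR2 : R ^ 2 = m ^ 2 + n ^ 2 := by
    rw [hR, Real.sq_sqrt (by positivity)]
  have hcpos : (0:ℝ) < 1 - (m ^ 2 + n ^ 2) := by linarith
  have hc : (1 - (m ^ 2 + n ^ 2)) ≠ 0 := ne_of_gt hcpos
  have hz : σz * σz = 1 := by
    subst hσz
    ext i j
    fin_cases i <;> fin_cases j <;>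
      simp [Matrix.mul_apply, Fin.sum_univ_two, Matrix.diagonal, Matrix.one_apply]
  have htrz : σz.trace = 0 := by
    subst hσz; simp [Matrix.trace, Fin.sum_univ_two]
  have htr1 : (1 : Matrix (Fin 2) (Fin 2) ℝ).trace = 2 := by
    simp [Matrix.trace_one]
  set B : Matrix ((Fin 2 ⊕ Fin 2) ⊕ (Fin 2 ⊕ Fin 2)) ((Fin 2 ⊕ Fin 2) ⊕ (Fin 2 ⊕ Fin 2)) ℝ :=
    (1 - (m ^ 2 + n ^ 2))⁻¹ • Matrix.fromBlocks 1 (-γ) (-γ) 1 with hB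
  have hγγ : γ * γ = (m ^ 2 + n ^ 2) • 1 := by
    rw [hγ, Matrix.fromBlocks_multiply,
      show ((m ^ 2 + n ^ 2) • (1 : Matrix (Fin 2 ⊕ Fin 2) (Fin 2 ⊕ Fin 2) ℝ)) =
        Matrix.fromBlocks ((m ^ 2 + n ^ 2) • 1) ((m ^ 2 + n ^ 2) • 0)
          ((m ^ 2 + n ^ 2) • 0) ((m ^ 2 + n ^ 2) • 1) from by
        rw [← Matrix.fromBlocks_smul, Matrix.fromBlocks_one]]
    refine Matrix.fromBlocks_inj.mpr ⟨?_, ?_, ?_, ?_⟩ <;>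
      simp only [Matrix.smul_mul, Matrix.mul_smul, Matrix.mul_neg, Matrix.neg_mul,
        Matrix.one_mul, Matrix.mul_one, hz, smul_smul, smul_neg, neg_neg] <;>
      module
  have hmul : Sig0 * B = 1 := by
    rw [hSig0, hB, Matrix.mul_smul, Matrix.fromBlocks_multiply]
    simp only [Matrix.one_mul, Matrix.mul_one, Matrix.mul_neg, hγγ, neg_add_cancel,
      add_neg_cancel]
    rw [show (1 : Matrix (Fin 2 ⊕ Fin 2) (Fin 2 ⊕ Fin 2) ℝ) +
          -((m ^ 2 + n ^ 2) • (1 : Matrix (Fin 2 ⊕ Fin 2) (Fin 2 ⊕ Fin 2) ℝ)) =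
          (1 - (m ^ 2 + n ^ 2)) • 1 from by module,
        show -((m ^ 2 + n ^ 2) • (1 : Matrix (Fin 2 ⊕ Fin 2) (Fin 2 ⊕ Fin 2) ℝ)) +
          (1 : Matrix (Fin 2 ⊕ Fin 2) (Fin 2 ⊕ Fin 2) ℝ) = (1 - (m ^ 2 + n ^ 2)) • 1 from by
          module,
        show (0 : Matrix (Fin 2 ⊕ Fin 2) (Fin 2 ⊕ Fin 2) ℝ) = (1 - (m ^ 2 + n ^ 2)) • 0 from by
          simp,
        ← Matrix.fromBlocks_smul, smul_smul, inv_mul_cancel₀ hc, one_smul,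
        Matrix.fromBlocks_one]
  have hSinv : Sig0⁻¹ = B := Matrix.inv_eq_right_inv hmul
  rw [hSinv, hB, hAn, hAm, hγn, hγm, hγ, hR2]
  refine ⟨?_, ?_, ?_⟩ <;>
  · simp only [Matrix.smul_mul, Matrix.mul_smul, Matrix.trace_smul, smul_smul, smul_eq_mul,
      Matrix.fromBlocks_multiply, Matrix.fromBlocks_add, Matrix.fromBlocks_neg,
      Matrix.mul_add, Matrix.add_mul, Matrix.neg_mul, Matrix.mul_neg, neg_neg, neg_zero,
      Matrix.one_mul, Matrix.mul_one, Matrix.zero_mul, Matrix.mul_zero, add_zero, zero_add,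
      smul_zero, smul_neg, hz, neg_add_rev,
      trace_fromBlocks', Matrix.trace_add, Matrix.trace_neg, Matrix.trace_smul,
      Matrix.trace_zero, htr1, htrz]
    field_simp
    ring
end

section
/- Let m, n be real numbers with 0 < m² + n² < 1, set R = √(m²+n²), b(m,n) = (1+R)/(1−R), and let Σ(m,n) be the 8×8 real-matrix-valued function (b/2)·[[I₄, γ],[γ, I₄]] with γ(m,n) = [[n·I₂, m·σ_z],[m·σ_z, −n·I₂]], σ_z = diag(1,−1). Define the 2×2 matrix g(m,n) by g_{μν} = (1/2)·Tr[Σ⁻¹(∂_μΣ)Σ⁻¹(∂_νΣ)], where ∂₁ = ∂/∂n and ∂₂ = ∂/∂m are the entrywise partial derivatives of Σ at (m,n). Then det g(m,n) = 16·(1 + (2 − R)²)/(1 − R²)³. -/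
open Matrix

namespace FisherRaoAux

abbrev M2 := Matrix (Fin 2) (Fin 2) ℝ
abbrev M4 := Matrix (Fin 2 ⊕ Fin 2) (Fin 2 ⊕ Fin 2) ℝ
abbrev M8 := Matrix ((Fin 2 ⊕ Fin 2) ⊕ (Fin 2 ⊕ Fin 2)) ((Fin 2 ⊕ Fin 2) ⊕ (Fin 2 ⊕ Fin 2)) ℝ

def sz : M2 := Matrix.diagonal ![1, -1]

lemma sz_sq : sz * sz = 1 := by
  ext i j
  fin_cases i <;> fin_cases j <;>
    simp [sz, Matrix.mul_apply, Fin.sum_univ_two, Matrix.diagonal, Matrix.one_apply]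

lemma trace_sz : sz.trace = 0 := by
  simp [sz, Matrix.trace_diagonal, Fin.sum_univ_two]

lemma trace_fromBlocks {l o : Type*} [Fintype l] [Fintype o]
    (A : Matrix l l ℝ) (B : Matrix l o ℝ) (C : Matrix o l ℝ) (D : Matrix o o ℝ) :
    (Matrix.fromBlocks A B C D).trace = A.trace + D.trace := by
  simp [Matrix.trace, Matrix.diag, Fintype.sum_sum_type, Matrix.fromBlocks]

def gam (m n : ℝ) : M4 := fromBlocks (n • 1) (m • sz) (m • sz) ((-n) • 1)

def Fm (m n : ℝ) : M8 := fromBlocks 1 (gam m n) (gam m n) 1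

def gg1 : M4 := fromBlocks 1 0 0 (-1)
def F1 : M8 := fromBlocks 0 gg1 gg1 0
def gg2 : M4 := fromBlocks 0 sz sz 0
def G1 : M8 := fromBlocks 0 gg2 gg2 0

lemma Hm_eq (m n : ℝ) : (2:ℝ) • (1:M8) - Fm m n = fromBlocks 1 (-gam m n) (-gam m n) 1 := by
  rw [Fm, show (1:M8) = fromBlocks 1 0 0 1 from fromBlocks_one.symm, fromBlocks_smul,
    sub_eq_add_neg, fromBlocks_neg, fromBlocks_add]
  rw [show (2:ℝ) • (1 : M4) + -(1:M4) = 1 from by module,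
      show (2:ℝ) • (0 : M4) + -(gam m n) = -(gam m n) from by module]

lemma gam_mul_gam (m n : ℝ) : gam m n * gam m n = (m^2+n^2) • 1 := by
  rw [gam, fromBlocks_multiply, show ((m^2+n^2) • (1:M4)) =
    fromBlocks ((m^2+n^2) • 1) 0 0 ((m^2+n^2) • 1) from by
      rw [show (1:M4) = fromBlocks 1 0 0 1 from fromBlocks_one.symm, fromBlocks_smul]; simp]
  rw [show (n•(1:M2))*(n•1) + (m•sz)*(m•sz) = (m^2+n^2)•1 from by
        simp [Matrix.smul_mul, Matrix.mul_smul, smul_smul, sz_sq]; module,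
      show (n•(1:M2))*(m•sz) + (m•sz)*((-n)•1) = 0 from by
        simp [Matrix.smul_mul, Matrix.mul_smul, smul_smul, sz_sq]; module,
      show (m•sz)*(n•(1:M2)) + ((-n)•1)*(m•sz) = 0 from by
        simp [Matrix.smul_mul, Matrix.mul_smul, smul_smul, sz_sq]; module,
      show (m•sz)*(m•sz) + ((-n)•(1:M2))*((-n)•1) = (m^2+n^2)•1 from by
        simp [Matrix.smul_mul, Matrix.mul_smul, smul_smul, sz_sq]; module]

def K1 (m n : ℝ) : M8 := ((2:ℝ) • 1 - Fm m n) * F1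
def K2 (m n : ℝ) : M8 := ((2:ℝ) • 1 - Fm m n) * G1

lemma trace_K1 (m n : ℝ) : (K1 m n).trace = -8*n := by
  simp [K1, Hm_eq, F1, gg1, gam, fromBlocks_multiply, trace_fromBlocks,
    Matrix.trace_add, Matrix.trace_smul, Matrix.trace_neg, trace_sz, Matrix.trace_one,
    Matrix.smul_mul, Matrix.mul_smul, smul_smul, sz_sq, neg_mul, mul_neg]
  ring

lemma trace_K2 (m n : ℝ) : (K2 m n).trace = -8*m := by
  simp [K2, Hm_eq, G1, gg2, gam, fromBlocks_multiply, trace_fromBlocks,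
    Matrix.trace_add, Matrix.trace_smul, Matrix.trace_neg, trace_sz, Matrix.trace_one,
    Matrix.smul_mul, Matrix.mul_smul, smul_smul, sz_sq, neg_mul, mul_neg]
  ring

lemma trace_K1K1 (m n : ℝ) : (K1 m n * K1 m n).trace = 8*(1+n^2-m^2) := by
  simp [K1, Hm_eq, F1, gg1, gam, fromBlocks_multiply, trace_fromBlocks,
    Matrix.trace_add, Matrix.trace_smul, Matrix.trace_neg, trace_sz, Matrix.trace_one,
    Matrix.smul_mul, Matrix.mul_smul, smul_smul, sz_sq, neg_mul, mul_neg,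
    Matrix.mul_add, Matrix.add_mul]
  ring

lemma trace_K2K2 (m n : ℝ) : (K2 m n * K2 m n).trace = 8*(1+m^2-n^2) := by
  simp [K2, Hm_eq, G1, gg2, gam, fromBlocks_multiply, trace_fromBlocks,
    Matrix.trace_add, Matrix.trace_smul, Matrix.trace_neg, trace_sz, Matrix.trace_one,
    Matrix.smul_mul, Matrix.mul_smul, smul_smul, sz_sq, neg_mul, mul_neg,
    Matrix.mul_add, Matrix.add_mul]
  ring

lemma trace_K1K2 (m n : ℝ) : (K1 m n * K2 m n).trace = 16*(m*n) := by
  simp [K1, K2, Hm_eq, F1, G1, gg1, gg2, gam, fromBlocks_multiply, trace_fromBlocks,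
    Matrix.trace_add, Matrix.trace_smul, Matrix.trace_neg, trace_sz, Matrix.trace_one,
    Matrix.smul_mul, Matrix.mul_smul, smul_smul, sz_sq, neg_mul, mul_neg,
    Matrix.mul_add, Matrix.add_mul]
  ring

lemma trace_K2K1 (m n : ℝ) : (K2 m n * K1 m n).trace = 16*(m*n) := by
  simp [K1, K2, Hm_eq, F1, G1, gg1, gg2, gam, fromBlocks_multiply, trace_fromBlocks,
    Matrix.trace_add, Matrix.trace_smul, Matrix.trace_neg, trace_sz, Matrix.trace_one,
    Matrix.smul_mul, Matrix.mul_smul, smul_smul, sz_sq, neg_mul, mul_neg,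
    Matrix.mul_add, Matrix.add_mul]
  ring

lemma Fm_mul_H (m n : ℝ) : Fm m n * ((2:ℝ) • 1 - Fm m n) = (1-(m^2+n^2)) • 1 := by
  rw [Hm_eq, Fm, fromBlocks_multiply,
      show ((1-(m^2+n^2)) • (1:M8)) =
        fromBlocks ((1-(m^2+n^2)) • 1) 0 0 ((1-(m^2+n^2)) • 1) from by
          rw [show (1:M8) = fromBlocks 1 0 0 1 from fromBlocks_one.symm, fromBlocks_smul]; simp]
  rw [show (1:M4)*1 + gam m n * (-gam m n) = (1-(m^2+n^2))•1 from by
        simp only [mul_neg, gam_mul_gam, one_mul]; module,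
      show (1:M4)*(-gam m n) + gam m n * 1 = 0 from by simp,
      show gam m n * 1 + (1:M4)*(-gam m n) = 0 from by simp,
      show gam m n * (-gam m n) + (1:M4)*1 = (1-(m^2+n^2))•1 from by
        simp only [mul_neg, gam_mul_gam, one_mul]; module]

lemma H_mul_F1 (m n : ℝ) : ((2:ℝ) • 1 - Fm m n) * F1 = K1 m n := rfl
lemma H_mul_G1 (m n : ℝ) : ((2:ℝ) • 1 - Fm m n) * G1 = K2 m n := rfl

lemma H_mul_Fm (m n : ℝ) : ((2:ℝ) • 1 - Fm m n) * Fm m n = (1-(m^2+n^2)) • 1 := by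
  rw [Hm_eq, Fm, fromBlocks_multiply,
      show ((1-(m^2+n^2)) • (1:M8)) =
        fromBlocks ((1-(m^2+n^2)) • 1) 0 0 ((1-(m^2+n^2)) • 1) from by
          rw [show (1:M8) = fromBlocks 1 0 0 1 from fromBlocks_one.symm, fromBlocks_smul]; simp]
  rw [show (1:M4)*1 + (-gam m n) * gam m n = (1-(m^2+n^2))•1 from by
        simp only [neg_mul, gam_mul_gam, one_mul]; module,
      show (1:M4)*(gam m n) + (-gam m n) * 1 = 0 from by simp,
      show (-gam m n) * 1 + (1:M4)*(gam m n) = 0 from by simp,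
      show (-gam m n) * gam m n + (1:M4)*1 = (1-(m^2+n^2))•1 from by
        simp only [neg_mul, gam_mul_gam, one_mul]; module]

lemma gam_decomp (m t : ℝ) : gam m t = gam m 0 + t • gg1 := by
  rw [gam, gam, gg1, fromBlocks_smul, fromBlocks_add]
  rw [show (0:ℝ)•(1:M2) + t•(1:M2) = t • 1 from by module,
      show (m•sz) + t•(0:M2) = m • sz from by module,
      show ((-0:ℝ))•(1:M2) + t•(-1:M2) = (-t) • 1 from by module]

lemma Fm_decomp (m t : ℝ) : Fm m t = Fm m 0 + t • F1 := by
  rw [Fm, Fm, F1, fromBlocks_smul, fromBlocks_add]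
  rw [show (1:M4) + t•(0:M4) = 1 from by module,
      show gam m 0 + t • gg1 = gam m t from (gam_decomp m t).symm]

lemma gam_decomp2 (t n : ℝ) : gam t n = gam 0 n + t • gg2 := by
  rw [gam, gam, gg2, fromBlocks_smul, fromBlocks_add]
  rw [show (n•(1:M2)) + t•(0:M2) = n • 1 from by module,
      show ((0:ℝ)•sz) + t•sz = t • sz from by module,
      show ((-n:ℝ))•(1:M2) + t•(0:M2) = (-n) • 1 from by module]

lemma Fm_decomp2 (t n : ℝ) : Fm t n = Fm 0 n + t • G1 := by
  rw [Fm, Fm, G1, fromBlocks_smul, fromBlocks_add]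
  rw [show (1:M4) + t•(0:M4) = 1 from by module,
      show gam 0 n + t • gg2 = gam t n from (gam_decomp2 t n).symm]

lemma hasDerivAt_aux (f : ℝ → ℝ) (x d : ℝ) (hf : HasDerivAt f d x)
    (hfx : 0 < f x) (hfx1 : f x < 1) :
    HasDerivAt (fun t => ((1 + Real.sqrt (f t)) / (1 - Real.sqrt (f t))) / 2)
      (d / (2 * Real.sqrt (f x) * (1 - Real.sqrt (f x))^2)) x := by
  have hRpos : 0 < Real.sqrt (f x) := Real.sqrt_pos.mpr hfx
  have hR1 : Real.sqrt (f x) < 1 := by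
    have := Real.sqrt_lt_sqrt (le_of_lt hfx) hfx1
    simpa [Real.sqrt_one] using this
  have hu : HasDerivAt (fun t => Real.sqrt (f t)) (d / (2 * Real.sqrt (f x))) x :=
    hf.sqrt (ne_of_gt hfx)
  have hden0 : 1 - Real.sqrt (f x) ≠ 0 := ne_of_gt (by linarith)
  have hq := ((hu.const_add 1).div (hu.const_sub 1) hden0).div_const 2
  refine hq.congr_deriv ?_
  field_simp
  ring

end FisherRaoAux

lemma det_scalar (m n R : ℝ) (hRne : R ≠ 0) (h2 : 1 - R^2 ≠ 0) (hR2 : R ^ 2 = m ^ 2 + n ^ 2) :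
    1/2 * (((1-R^2)⁻¹)^2 * (8*(2*n/R)^2 + 2*(2*n/R)*(-(8*n)) + 8*(1+n^2-m^2))) *
      (1/2 * (((1-R^2)⁻¹)^2 * (8*(2*m/R)^2 + 2*(2*m/R)*(-(8*m)) + 8*(1+m^2-n^2)))) -
    1/2 * (((1-R^2)⁻¹)^2 * (8*(2*n/R)*(2*m/R) + (2*n/R)*(-(8*m)) + (2*m/R)*(-(8*n)) + 16*(m*n))) *
      (1/2 * (((1-R^2)⁻¹)^2 * (8*(2*n/R)*(2*m/R) + (2*n/R)*(-(8*m)) + (2*m/R)*(-(8*n)) + 16*(m*n)))) =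
    16 * (1 + (2 - R) ^ 2) / (1 - R ^ 2) ^ 3 := by
  have key : 1/2 * (((1-R^2)⁻¹)^2 * (8*(2*n/R)^2 + 2*(2*n/R)*(-(8*n)) + 8*(1+n^2-m^2))) *
      (1/2 * (((1-R^2)⁻¹)^2 * (8*(2*m/R)^2 + 2*(2*m/R)*(-(8*m)) + 8*(1+m^2-n^2)))) -
    1/2 * (((1-R^2)⁻¹)^2 * (8*(2*n/R)*(2*m/R) + (2*n/R)*(-(8*m)) + (2*m/R)*(-(8*n)) + 16*(m*n))) *
      (1/2 * (((1-R^2)⁻¹)^2 * (8*(2*n/R)*(2*m/R) + (2*n/R)*(-(8*m)) + (2*m/R)*(-(8*n)) + 16*(m*n)))) =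
      16*(((1-R^2)⁻¹)^4) * (((2-R)^2/R^2) * ((m^2+n^2) - (m^2+n^2)^2) + (1 - (m^2+n^2))) := by
    field_simp
    ring
  rw [key, ← hR2]
  field_simp
  ring

open FisherRaoAux in
/-- Determinant of the Fisher–Rao metric of the paper's pure two-mode symmetric
bipartite Gaussian state with covariance `Sig(m,n) = (b/2)·[[I₄, γ],[γ, I₄]]`,
`b = (1+R)/(1−R)`: `det g = 16(1 + (2 − R)²)/(1 − R²)³`. -/
theorem fisher_rao_det (m n : ℝ) (h0 : 0 < m ^ 2 + n ^ 2) (h1 : m ^ 2 + n ^ 2 < 1)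
    (R : ℝ) (hR : R = Real.sqrt (m ^ 2 + n ^ 2))
    (σz : Matrix (Fin 2) (Fin 2) ℝ) (hσz : σz = Matrix.diagonal ![1, -1])
    (γ : ℝ → ℝ → Matrix (Fin 2 ⊕ Fin 2) (Fin 2 ⊕ Fin 2) ℝ)
    (hγ : ∀ x y : ℝ, γ x y = Matrix.fromBlocks (y • (1 : Matrix (Fin 2) (Fin 2) ℝ))
        (x • σz) (x • σz) (-(y • (1 : Matrix (Fin 2) (Fin 2) ℝ))))
    (Sig : ℝ → ℝ →
      Matrix ((Fin 2 ⊕ Fin 2) ⊕ (Fin 2 ⊕ Fin 2)) ((Fin 2 ⊕ Fin 2) ⊕ (Fin 2 ⊕ Fin 2)) ℝ)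
    (hSig : ∀ x y : ℝ, Sig x y =
      (((1 + Real.sqrt (x ^ 2 + y ^ 2)) / (1 - Real.sqrt (x ^ 2 + y ^ 2))) / 2) •
        Matrix.fromBlocks 1 (γ x y) (γ x y) 1)
    -- entrywise partial derivatives of `Sig` at `(m, n)`: `D1 = ∂Sig/∂n`, `D2 = ∂Sig/∂m`
    (D1 D2 : Matrix ((Fin 2 ⊕ Fin 2) ⊕ (Fin 2 ⊕ Fin 2)) ((Fin 2 ⊕ Fin 2) ⊕ (Fin 2 ⊕ Fin 2)) ℝ)
    (hD1 : ∀ i j, D1 i j = deriv (fun t => Sig m t i j) n)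
    (hD2 : ∀ i j, D2 i j = deriv (fun t => Sig t n i j) m)
    -- the Fisher–Rao metric `g_{μν} = (1/2)·Tr[Sig⁻¹(∂_μ Sig)Sig⁻¹(∂_ν Sig)]`
    (g : Matrix (Fin 2) (Fin 2) ℝ)
    (hg : g = !![(1 / 2 : ℝ) * ((Sig m n)⁻¹ * D1 * (Sig m n)⁻¹ * D1).trace,
                 (1 / 2 : ℝ) * ((Sig m n)⁻¹ * D1 * (Sig m n)⁻¹ * D2).trace;
                 (1 / 2 : ℝ) * ((Sig m n)⁻¹ * D2 * (Sig m n)⁻¹ * D1).trace,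
                 (1 / 2 : ℝ) * ((Sig m n)⁻¹ * D2 * (Sig m n)⁻¹ * D2).trace]) :
    g.det = 16 * (1 + (2 - R) ^ 2) / (1 - R ^ 2) ^ 3 := by
  have hR2 : R ^ 2 = m ^ 2 + n ^ 2 := by rw [hR]; exact Real.sq_sqrt h0.le
  have hRpos : 0 < R := hR ▸ Real.sqrt_pos.mpr h0
  have hR1 : R < 1 := by
    rw [hR]
    have := Real.sqrt_lt_sqrt h0.le h1
    simpa [Real.sqrt_one] using this
  have hRne : R ≠ 0 := ne_of_gt hRpos
  have h1Rne : (1:ℝ) - R ≠ 0 := ne_of_gt (by linarith)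
  have h1R2ne : (1:ℝ) - R^2 ≠ 0 := by nlinarith
  set c : ℝ := ((1 + R) / (1 - R)) / 2 with hc
  have hcpos : 0 < c := by
    rw [hc]
    exact div_pos (div_pos (by linarith) (by linarith)) (by norm_num)
  have hcne : c ≠ 0 := ne_of_gt hcpos
  have hσz' : σz = FisherRaoAux.sz := hσz
  have hgam : ∀ x y : ℝ, γ x y = gam x y := by
    intro x y
    rw [hγ x y, hσz', gam, neg_smul]
  have hSigF : Sig m n = c • Fm m n := by
    rw [hSig m n, hgam m n, ← hR, hc]
    rfl
  have hinv : (Sig m n)⁻¹ = (c*(1-R^2))⁻¹ • ((2:ℝ) • 1 - Fm m n) := by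
    apply Matrix.inv_eq_right_inv
    rw [hSigF, Matrix.smul_mul, Matrix.mul_smul, smul_smul, Fm_mul_H, ← hR2, smul_smul,
      show c * (c*(1-R^2))⁻¹ * (1-R^2) = 1 from by field_simp, one_smul]
  have haffd : ∀ (x a b : ℝ), HasDerivAt (fun t : ℝ => a + t * b) b x := by
    intro x a b
    simpa using ((hasDerivAt_id x).mul_const b).const_add a
  have hD1' : D1 = (n/(R*(1-R)^2)) • Fm m n + c • F1 := by
    ext i j
    rw [hD1 i j]
    have hfun : (fun t => Sig m t i j) = fun t =>
        (((1 + Real.sqrt (m^2+t^2)) / (1 - Real.sqrt (m^2+t^2))) / 2) *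
          ((Fm m 0) i j + t * F1 i j) := by
      funext t
      rw [hSig m t, hgam m t,
        show fromBlocks 1 (gam m t) (gam m t) 1 = Fm m t from rfl, Fm_decomp,
        Matrix.smul_apply, smul_eq_mul, Matrix.add_apply, Matrix.smul_apply, smul_eq_mul]
    have hin : HasDerivAt (fun t : ℝ => m^2 + t^2) (2*n) n := by
      simpa using (hasDerivAt_pow 2 n).const_add (m^2)
    have hcd : HasDerivAt
        (fun t : ℝ => ((1 + Real.sqrt (m^2+t^2)) / (1 - Real.sqrt (m^2+t^2))) / 2)
        (2*n / (2 * Real.sqrt (m^2+n^2) * (1 - Real.sqrt (m^2+n^2))^2)) n :=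
      hasDerivAt_aux (fun t => m^2+t^2) n (2*n) hin h0 h1
    have hd : HasDerivAt (fun t : ℝ => ((1 + Real.sqrt (m^2+t^2)) / (1 - Real.sqrt (m^2+t^2))) / 2 *
        ((Fm m 0) i j + t * F1 i j)) _ n := hcd.mul (haffd n ((Fm m 0) i j) (F1 i j))
    rw [hfun, hd.deriv, Matrix.add_apply, Matrix.smul_apply, Matrix.smul_apply,
      smul_eq_mul, smul_eq_mul, ← hR, Fm_decomp m n, Matrix.add_apply, Matrix.smul_apply,
      smul_eq_mul, hc]
    field_simp
  have hD2' : D2 = (m/(R*(1-R)^2)) • Fm m n + c • G1 := by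
    ext i j
    rw [hD2 i j]
    have hfun : (fun t => Sig t n i j) = fun t =>
        (((1 + Real.sqrt (t^2+n^2)) / (1 - Real.sqrt (t^2+n^2))) / 2) *
          ((Fm 0 n) i j + t * G1 i j) := by
      funext t
      rw [hSig t n, hgam t n,
        show fromBlocks 1 (gam t n) (gam t n) 1 = Fm t n from rfl, Fm_decomp2,
        Matrix.smul_apply, smul_eq_mul, Matrix.add_apply, Matrix.smul_apply, smul_eq_mul]
    have hin : HasDerivAt (fun t : ℝ => t^2 + n^2) (2*m) m := by
      simpa using (hasDerivAt_pow 2 m).add_const (n^2)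
    have hcd : HasDerivAt
        (fun t : ℝ => ((1 + Real.sqrt (t^2+n^2)) / (1 - Real.sqrt (t^2+n^2))) / 2)
        (2*m / (2 * Real.sqrt (m^2+n^2) * (1 - Real.sqrt (m^2+n^2))^2)) m :=
      hasDerivAt_aux (fun t => t^2+n^2) m (2*m) hin h0 h1
    have hd : HasDerivAt (fun t : ℝ => ((1 + Real.sqrt (t^2+n^2)) / (1 - Real.sqrt (t^2+n^2))) / 2 *
        ((Fm 0 n) i j + t * G1 i j)) _ m := hcd.mul (haffd m ((Fm 0 n) i j) (G1 i j))
    rw [hfun, hd.deriv, Matrix.add_apply, Matrix.smul_apply, Matrix.smul_apply,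
      smul_eq_mul, smul_eq_mul, ← hR, Fm_decomp2 m n, Matrix.add_apply, Matrix.smul_apply,
      smul_eq_mul, hc]
    field_simp
  have hM1 : (Sig m n)⁻¹ * D1 = (1-R^2)⁻¹ • ((2*n/R) • 1 + K1 m n) := by
    rw [hinv, hD1', Matrix.smul_mul, Matrix.mul_add, Matrix.mul_smul, Matrix.mul_smul,
      H_mul_Fm, ← hR2, H_mul_F1]
    conv_rhs => rw [smul_add, smul_smul]
    rw [smul_add, smul_smul, smul_smul, smul_smul,
      show (c*(1-R^2))⁻¹ * (n/(R*(1-R)^2)) * (1-R^2) = (1-R^2)⁻¹ * (2*n/R) from by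
        rw [hc]; field_simp; ring,
      show (c*(1-R^2))⁻¹ * c = (1-R^2)⁻¹ from by rw [hc]; field_simp]
  have hM2 : (Sig m n)⁻¹ * D2 = (1-R^2)⁻¹ • ((2*m/R) • 1 + K2 m n) := by
    rw [hinv, hD2', Matrix.smul_mul, Matrix.mul_add, Matrix.mul_smul, Matrix.mul_smul,
      H_mul_Fm, ← hR2, H_mul_G1]
    conv_rhs => rw [smul_add, smul_smul]
    rw [smul_add, smul_smul, smul_smul, smul_smul,
      show (c*(1-R^2))⁻¹ * (m/(R*(1-R)^2)) * (1-R^2) = (1-R^2)⁻¹ * (2*m/R) from by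
        rw [hc]; field_simp; ring,
      show (c*(1-R^2))⁻¹ * c = (1-R^2)⁻¹ from by rw [hc]; field_simp]
  have t11 : ((Sig m n)⁻¹ * D1 * (Sig m n)⁻¹ * D1).trace =
      ((1-R^2)⁻¹)^2 * (8*(2*n/R)^2 + 2*(2*n/R)*(-(8*n)) + 8*(1+n^2-m^2)) := by
    rw [show (Sig m n)⁻¹ * D1 * (Sig m n)⁻¹ * D1 =
      ((Sig m n)⁻¹ * D1) * ((Sig m n)⁻¹ * D1) from Matrix.mul_assoc _ _ _, hM1]
    simp only [Matrix.mul_add, Matrix.add_mul, Matrix.smul_mul, Matrix.mul_smul, Matrix.one_mul,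
      Matrix.mul_one, smul_smul, Matrix.trace_add, Matrix.trace_smul, smul_eq_mul,
      Matrix.trace_one, trace_K1, trace_K1K1, Fintype.card_sum, Fintype.card_fin,
      Nat.cast_ofNat, Nat.reduceAdd]
    ring
  have t22 : ((Sig m n)⁻¹ * D2 * (Sig m n)⁻¹ * D2).trace =
      ((1-R^2)⁻¹)^2 * (8*(2*m/R)^2 + 2*(2*m/R)*(-(8*m)) + 8*(1+m^2-n^2)) := by
    rw [show (Sig m n)⁻¹ * D2 * (Sig m n)⁻¹ * D2 =
      ((Sig m n)⁻¹ * D2) * ((Sig m n)⁻¹ * D2) from Matrix.mul_assoc _ _ _, hM2]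
    simp only [Matrix.mul_add, Matrix.add_mul, Matrix.smul_mul, Matrix.mul_smul, Matrix.one_mul,
      Matrix.mul_one, smul_smul, Matrix.trace_add, Matrix.trace_smul, smul_eq_mul,
      Matrix.trace_one, trace_K2, trace_K2K2, Fintype.card_sum, Fintype.card_fin,
      Nat.cast_ofNat, Nat.reduceAdd]
    ring
  have t12 : ((Sig m n)⁻¹ * D1 * (Sig m n)⁻¹ * D2).trace =
      ((1-R^2)⁻¹)^2 * (8*(2*n/R)*(2*m/R) + (2*n/R)*(-(8*m)) + (2*m/R)*(-(8*n)) + 16*(m*n)) := by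
    rw [show (Sig m n)⁻¹ * D1 * (Sig m n)⁻¹ * D2 =
      ((Sig m n)⁻¹ * D1) * ((Sig m n)⁻¹ * D2) from Matrix.mul_assoc _ _ _, hM1, hM2]
    simp only [Matrix.mul_add, Matrix.add_mul, Matrix.smul_mul, Matrix.mul_smul, Matrix.one_mul,
      Matrix.mul_one, smul_smul, Matrix.trace_add, Matrix.trace_smul, smul_eq_mul,
      Matrix.trace_one, trace_K1, trace_K2, trace_K1K2, Fintype.card_sum, Fintype.card_fin,
      Nat.cast_ofNat, Nat.reduceAdd]
    ring
  have t21 : ((Sig m n)⁻¹ * D2 * (Sig m n)⁻¹ * D1).trace =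
      ((1-R^2)⁻¹)^2 * (8*(2*n/R)*(2*m/R) + (2*n/R)*(-(8*m)) + (2*m/R)*(-(8*n)) + 16*(m*n)) := by
    rw [show (Sig m n)⁻¹ * D2 * (Sig m n)⁻¹ * D1 =
      ((Sig m n)⁻¹ * D2) * ((Sig m n)⁻¹ * D1) from Matrix.mul_assoc _ _ _, hM1, hM2]
    simp only [Matrix.mul_add, Matrix.add_mul, Matrix.smul_mul, Matrix.mul_smul, Matrix.one_mul,
      Matrix.mul_one, smul_smul, Matrix.trace_add, Matrix.trace_smul, smul_eq_mul,
      Matrix.trace_one, trace_K1, trace_K2, trace_K2K1, Fintype.card_sum, Fintype.card_fin,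
      Nat.cast_ofNat, Nat.reduceAdd]
    ring
  rw [hg, Matrix.det_fin_two_of, t11, t12, t21, t22]
  exact det_scalar m n R hRne h1R2ne hR2
end
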